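/- Let G be a simple graph in which every vertex has degree at most 4, every edge has at least one endpoint of degree 4, and there are no isolated vertices. Let m be the number of edges and n_i the number of vertices of degree i. Then the arithmetic-geometric index AG(G) = sum over edges uv of (d_u + d_v)/(2*sqrt(d_u * d_v)) satisfies AG(G) = (3/4)*n_1 + (3/sqrt(2) - 1)*n_2 + (21/(4*sqrt(3)) - 3/2)*n_3 + 2*n_4. -/

import Mathlib

noncomputable def agCost (i j : ℕ) : ℝ := ((i : ℝ) + j) / (2 * Real.sqrt ((i : ℝ) * j))

lemma agCost_comm (i j : ℕ) : agCost i j = agCost j i := by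
  unfold agCost; rw [add_comm, mul_comm (i : ℝ) (j : ℝ)]

/-- The arithmetic-geometric index of a graph: the sum over edges `uv` of
`(d_u + d_v) / (2 * sqrt (d_u * d_v))`. -/
noncomputable def agIndex {V : Type*} [Fintype V] (G : SimpleGraph V) [DecidableRel G.Adj] : ℝ :=
  ∑ e ∈ G.edgeFinset,
    Sym2.lift ⟨fun u v => agCost (G.degree u) (G.degree v),
      fun u v => agCost_comm (G.degree u) (G.degree v)⟩ e

/-- split weight -/
noncomputable def agW (i j : ℕ) : ℝ := if i = 4 then 1/2 else agCost i j - 1/2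

lemma sqrt16 : Real.sqrt ((4:ℝ)*4) = 4 := by
  rw [show ((4:ℝ)*4) = 4^2 by norm_num, Real.sqrt_sq (by norm_num)]

lemma agCost44 : agCost 4 4 = 1 := by
  unfold agCost; push_cast; rw [sqrt16]; norm_num

lemma agW_add (i j : ℕ) (h : i = 4 ∨ j = 4) : agW i j + agW j i = agCost i j := by
  unfold agW
  rcases h with h | h
  · subst h
    by_cases hj : j = 4
    · subst hj; simp [agCost44]; norm_num
    · simp [hj, agCost_comm]
  · subst h
    by_cases hi : i = 4
    · subst hi; simp [agCost44]; norm_num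
    · simp [hi]

theorem test {V : Type*} [Fintype V] [DecidableEq V]
    (G : SimpleGraph V) [DecidableRel G.Adj]
    (hedge : ∀ u v, G.Adj u v → G.degree u = 4 ∨ G.degree v = 4) :
    agIndex G = ∑ d : G.Dart, agW (G.degree d.fst) (G.degree d.snd) := by
  rw [← Finset.sum_fiberwise_of_maps_to (g := SimpleGraph.Dart.edge) (t := G.edgeFinset)
      (fun d _ => by rw [SimpleGraph.mem_edgeFinset]; exact d.edge_mem)]
  unfold agIndex
  refine Finset.sum_congr rfl ?_
  intro e he
  induction e with
  | _ u v =>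
    rw [SimpleGraph.mem_edgeFinset, SimpleGraph.mem_edgeSet] at he
    have hfib : (Finset.univ.filter fun d : G.Dart => d.edge = s(u,v)) =
        {SimpleGraph.Dart.mk (u,v) he, (SimpleGraph.Dart.mk (u,v) he).symm} := by
      have := SimpleGraph.Dart.edge_fiber (SimpleGraph.Dart.mk (u,v) he)
      convert this using 2
      exact Iff.rfl
    rw [hfib, Finset.sum_pair (SimpleGraph.Dart.mk (u,v) he).symm_ne.symm]
    rw [Sym2.lift_mk]
    exact (agW_add _ _ (hedge u v he)).symm

noncomputable def agC (d : ℕ) : ℝ := if d = 4 then 2 else d * (agCost d 4 - 1/2)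

theorem test2 {V : Type*} [Fintype V] [DecidableEq V]
    (G : SimpleGraph V) [DecidableRel G.Adj]
    (hedge : ∀ u v, G.Adj u v → G.degree u = 4 ∨ G.degree v = 4) :
    ∑ d : G.Dart, agW (G.degree d.fst) (G.degree d.snd) = ∑ v, agC (G.degree v) := by
  rw [← Fintype.sum_equiv
      (Equiv.mk (fun s : Σ v : V, G.neighborSet v => (⟨(s.fst, s.snd), s.snd.property⟩ : G.Dart))
        (fun d => ⟨d.fst, d.snd, d.adj⟩) (fun s => by ext <;> simp) (fun d => by ext <;> simp))
      (fun s => agW (G.degree s.fst) (G.degree s.snd.val)) _ (fun s => rfl)]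
  rw [← Finset.univ_sigma_univ, Finset.sum_sigma]
  refine Finset.sum_congr rfl fun v _ => ?_
  by_cases hv : G.degree v = 4
  · rw [show (∑ u : G.neighborSet v, agW (G.degree v) (G.degree u.val))
        = ∑ u : G.neighborSet v, (1/2 : ℝ) from
        Finset.sum_congr rfl fun u _ => by simp [agW, hv]]
    rw [Finset.sum_const, Finset.card_univ, SimpleGraph.card_neighborSet_eq_degree, hv, agC]
    norm_num
  · rw [show (∑ u : G.neighborSet v, agW (G.degree v) (G.degree u.val))
        = ∑ u : G.neighborSet v, (agCost (G.degree v) 4 - 1/2) from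
        Finset.sum_congr rfl fun u _ => by
          have h4 : G.degree u.val = 4 := (hedge v u.val u.property).resolve_left hv
          simp [agW, hv, h4]]
    rw [Finset.sum_const, Finset.card_univ, SimpleGraph.card_neighborSet_eq_degree]
    simp [agC, hv, mul_comm]

lemma agC1 : agC 1 = 3/4 := by
  unfold agC agCost
  norm_num

lemma agC2 : agC 2 = 3 / Real.sqrt 2 - 1 := by
  unfold agC agCost
  norm_num
  rw [show ((8:ℝ)) = 2^2*2 by norm_num, Real.sqrt_mul (by positivity), Real.sqrt_sq (by norm_num)]
  have h2 : Real.sqrt 2 ≠ 0 := by positivity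
  field_simp
  ring

lemma agC3 : agC 3 = 21 / (4 * Real.sqrt 3) - 3/2 := by
  unfold agC agCost
  norm_num
  rw [show ((12:ℝ)) = 2^2*3 by norm_num, Real.sqrt_mul (by positivity), Real.sqrt_sq (by norm_num)]
  have h3 : Real.sqrt 3 ≠ 0 := by positivity
  field_simp
  ring

lemma agC4 : agC 4 = 2 := by simp [agC]

theorem test3 {V : Type*} [Fintype V] [DecidableEq V]
    (G : SimpleGraph V) [DecidableRel G.Adj]
    (hmax : ∀ v, G.degree v ≤ 4)
    (hiso : ∀ v, 1 ≤ G.degree v) :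
    ∑ v, agC (G.degree v) =
      (3 / 4) * ((Finset.univ.filter fun v => G.degree v = 1).card : ℝ)
        + (3 / Real.sqrt 2 - 1) * ((Finset.univ.filter fun v => G.degree v = 2).card : ℝ)
        + (21 / (4 * Real.sqrt 3) - 3 / 2) * ((Finset.univ.filter fun v => G.degree v = 3).card : ℝ)
        + 2 * ((Finset.univ.filter fun v => G.degree v = 4).card : ℝ) := by
  have hdeg : ∀ v, G.degree v ∈ ({1,2,3,4} : Finset ℕ) := by
    intro v
    have h1 := hmax v; have h2 := hiso v
    simp only [Finset.mem_insert, Finset.mem_singleton]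
    omega
  calc ∑ v, agC (G.degree v)
      = ∑ v, ∑ k ∈ ({1,2,3,4} : Finset ℕ), if G.degree v = k then agC k else 0 := by
        refine Finset.sum_congr rfl fun v _ => ?_
        rw [Finset.sum_ite_eq, if_pos (hdeg v)]
    _ = ∑ k ∈ ({1,2,3,4} : Finset ℕ),
          ((Finset.univ.filter fun v => G.degree v = k).card : ℝ) * agC k := by
        rw [Finset.sum_comm]
        refine Finset.sum_congr rfl fun k _ => ?_
        rw [Finset.sum_ite, Finset.sum_const, Finset.sum_const_zero, add_zero, nsmul_eq_mul]
    _ = _ := by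
        norm_num [Finset.sum_insert, Finset.mem_insert]
        rw [agC1, agC2, agC3, agC4]
        ring

theorem stmt_15 {V : Type*} [Fintype V] [DecidableEq V]
    (G : SimpleGraph V) [DecidableRel G.Adj]
    (hmax : ∀ v, G.degree v ≤ 4)
    (hiso : ∀ v, 1 ≤ G.degree v)
    (hedge : ∀ u v, G.Adj u v → G.degree u = 4 ∨ G.degree v = 4) :
    agIndex G =
      (3 / 4) * ((Finset.univ.filter fun v => G.degree v = 1).card : ℝ)
        + (3 / Real.sqrt 2 - 1) * ((Finset.univ.filter fun v => G.degree v = 2).card : ℝ)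
        + (21 / (4 * Real.sqrt 3) - 3 / 2) * ((Finset.univ.filter fun v => G.degree v = 3).card : ℝ)
        + 2 * ((Finset.univ.filter fun v => G.degree v = 4).card : ℝ) := by
  rw [test G hedge, test2 G hedge]
  exact test3 G hmax hiso
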